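/- Let G : ℂ² → ℝ be a nonnegative continuous function that is subharmonic along every complex line, and let Λ : ℂ² → ℂ² be an invertible linear map with G ∘ Λ = d·G for some d > 1. If G vanishes on a circle {(z₁, 0) : |z₁| = r} × {0} inside the line L = {z₂ = 0} (with r > 0), and z₁ ↦ G(z₁, 0) is subharmonic on ℂ, and Λ preserves L acting on it as z₁ ↦ λ₁ z₁ with |λ₁| > 1, then G vanishes identically on L. -/

import Mathlib

/-- If a nonnegative continuous function `G` on ℂ², subharmonic along the line
`L = {z₂ = 0}`, vanishes on a circle `{|z₁| = r}` in `L`, and satisfies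
`G(λ₁z₁,0) = d·G(z₁,0)` with `|λ₁| > 1` and `d > 1`, then `G` vanishes identically
on `L`. -/
theorem stmt_16 (G : ℂ × ℂ → ℝ) (l₁ : ℂ) (d r : ℝ)
    (hG : Continuous G) (hGpos : ∀ z : ℂ × ℂ, 0 ≤ G z)
    (hsub : ∀ z : ℂ, ∀ s : ℝ, 0 < s →
      G (z, 0) ≤ (2 * Real.pi)⁻¹ * ∫ t in (0 : ℝ)..(2 * Real.pi),
        G (z + s * Complex.exp (t * Complex.I), 0))
    (hl : 1 < ‖l₁‖) (hd : 1 < d)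
    (hinv : ∀ z : ℂ, G (l₁ * z, 0) = d * G (z, 0))
    (hr : 0 < r) (hcirc : ∀ z : ℂ, ‖z‖ = r → G (z, 0) = 0) :
    ∀ z : ℂ, G (z, 0) = 0 := by
  set g : ℂ → ℝ := fun z => G (z, 0) with hgdef
  have hgc : Continuous g := hG.comp (continuous_id.prodMk continuous_const)
  have twopi_pos : (0:ℝ) < 2 * Real.pi := by positivity
  -- Step 1: g vanishes on the closed ball of radius r
  have hball : ∀ z : ℂ, ‖z‖ ≤ r → g z = 0 := by
    by_contra hc
    push_neg at hc
    obtain ⟨w, hwr, hw0⟩ := hc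
    have hwmem : w ∈ Metric.closedBall (0:ℂ) r := by
      simpa [Metric.mem_closedBall, Complex.dist_eq] using hwr
    obtain ⟨z₀, hz₀mem, hz₀max⟩ :=
      (isCompact_closedBall (0:ℂ) r).exists_isMaxOn ⟨w, hwmem⟩ hgc.continuousOn
    set M := g z₀ with hM
    have hMpos : 0 < M :=
      lt_of_lt_of_le (lt_of_le_of_ne (hGpos (w, 0)) (Ne.symm hw0)) (hz₀max hwmem)
    have hz₀r : ‖z₀‖ ≤ r := by
      simpa [Metric.mem_closedBall, Complex.dist_eq] using hz₀mem
    have hz₀lt : ‖z₀‖ < r := by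
      rcases lt_or_eq_of_le hz₀r with h | h
      · exact h
      · exact absurd ((hcirc z₀ h) : M = 0) (ne_of_gt hMpos)
    set s := r - ‖z₀‖ with hs
    have hs0 : 0 < s := sub_pos.mpr hz₀lt
    -- all points on the circle of radius s around z₀ lie in the closed ball
    have hle : ∀ t : ℝ, g (z₀ + s * Complex.exp (t * Complex.I)) ≤ M := by
      intro t
      apply hz₀max
      have : ‖z₀ + s * Complex.exp (t * Complex.I)‖ ≤ r := by
        calc ‖z₀ + s * Complex.exp (t * Complex.I)‖
            ≤ ‖z₀‖ + ‖(s:ℂ) * Complex.exp (t * Complex.I)‖ :=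
              norm_add_le _ _
          _ = ‖z₀‖ + s := by
              rw [norm_mul, Complex.norm_exp_ofReal_mul_I, mul_one, Complex.norm_real,
                Real.norm_eq_abs, abs_of_pos hs0]
          _ = r := by rw [hs]; ring
      simpa [Metric.mem_closedBall, Complex.dist_eq] using this
    -- there is a point on this circle lying on the circle of radius r, where g = 0
    have hwitness : ∃ t ∈ Set.Icc (0:ℝ) (2 * Real.pi),
        g (z₀ + s * Complex.exp (t * Complex.I)) < M := by
      rcases eq_or_ne z₀ 0 with hz | hz
      · refine ⟨0, ⟨le_refl _, twopi_pos.le⟩, ?_⟩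
        have h0 : ‖z₀‖ = 0 := by simp [hz]
        have habs : ‖z₀ + s * Complex.exp ((0:ℝ) * Complex.I)‖ = r := by
          rw [hz, zero_add, norm_mul, Complex.norm_exp_ofReal_mul_I, mul_one,
            Complex.norm_real, Real.norm_eq_abs, abs_of_pos hs0, hs, h0, sub_zero]
        exact ((hcirc _ habs) : g _ = 0).trans_lt hMpos
      · have h1 : -Real.pi < z₀.arg := Complex.neg_pi_lt_arg z₀
        have h2 : z₀.arg ≤ Real.pi := Complex.arg_le_pi z₀
        have harg : (‖z₀‖ : ℂ) * Complex.exp (z₀.arg * Complex.I) = z₀ :=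
          Complex.norm_mul_exp_arg_mul_I z₀
        set t₀ := if 0 ≤ z₀.arg then z₀.arg else z₀.arg + 2 * Real.pi with ht₀
        have hexp : Complex.exp ((t₀:ℝ) * Complex.I) = Complex.exp (z₀.arg * Complex.I) := by
          rw [ht₀]
          split_ifs with h
          · rfl
          · push_cast
            rw [add_mul, Complex.exp_add, Complex.exp_two_pi_mul_I, mul_one]
        have hmem : t₀ ∈ Set.Icc (0:ℝ) (2 * Real.pi) := by
          have hpi : (0:ℝ) < Real.pi := Real.pi_pos
          rw [ht₀]
          split_ifs with h
          · exact ⟨h, by nlinarith⟩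
          · push_neg at h
            exact ⟨by nlinarith, by nlinarith⟩
        refine ⟨t₀, hmem, ?_⟩
        have habs : ‖z₀ + s * Complex.exp ((t₀:ℝ) * Complex.I)‖ = r := by
          rw [hexp]
          have heq : z₀ + (s:ℂ) * Complex.exp (z₀.arg * Complex.I)
              = ((‖z₀‖ + s : ℝ) : ℂ) * Complex.exp (z₀.arg * Complex.I) := by
            push_cast
            rw [add_mul, harg]
          rw [heq, norm_mul, Complex.norm_exp_ofReal_mul_I, mul_one, Complex.norm_real, Real.norm_eq_abs,
            abs_of_pos (by positivity : (0:ℝ) < ‖z₀‖ + s)]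
          rw [hs]; ring
        exact ((hcirc _ habs) : g _ = 0).trans_lt hMpos
    -- strict integral inequality
    have hcont : Continuous fun t : ℝ => g (z₀ + s * Complex.exp (t * Complex.I)) := by
      apply hgc.comp
      continuity
    have hint : (∫ t in (0:ℝ)..(2 * Real.pi), g (z₀ + s * Complex.exp (t * Complex.I)))
        < ∫ _ in (0:ℝ)..(2 * Real.pi), M := by
      apply intervalIntegral.integral_lt_integral_of_continuousOn_of_le_of_exists_lt twopi_pos
        hcont.continuousOn continuousOn_const (fun t _ => hle t) hwitness
    have hconst : (∫ _ in (0:ℝ)..(2 * Real.pi), M) = 2 * Real.pi * M := by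
      simp [intervalIntegral.integral_const, smul_eq_mul]
    have hMle : M ≤ (2 * Real.pi)⁻¹ * ∫ t in (0:ℝ)..(2 * Real.pi),
        g (z₀ + s * Complex.exp (t * Complex.I)) := hsub z₀ s hs0
    have : M < M := by
      calc M ≤ (2 * Real.pi)⁻¹ * ∫ t in (0:ℝ)..(2 * Real.pi),
              g (z₀ + s * Complex.exp (t * Complex.I)) := hMle
        _ < (2 * Real.pi)⁻¹ * (2 * Real.pi * M) := by
            rw [← hconst]
            exact (mul_lt_mul_iff_right₀ (inv_pos.mpr twopi_pos)).mpr hint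
        _ = M := by field_simp
    exact lt_irrefl M this
  -- Step 2: iterate the invariance
  have hiter : ∀ n : ℕ, ∀ z : ℂ, g (l₁ ^ n * z) = d ^ n * g z := by
    intro n
    induction n with
    | zero => intro z; simp
    | succ n ih =>
      intro z
      rw [pow_succ, pow_succ, mul_comm (l₁ ^ n) l₁, mul_assoc]
      have h1 : g (l₁ * (l₁ ^ n * z)) = d * g (l₁ ^ n * z) := hinv _
      rw [h1, ih z]
      ring
  -- Step 3: conclude
  intro z
  obtain ⟨n, hn⟩ := pow_unbounded_of_one_lt (‖z‖ / r) hl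
  have hln : (0:ℝ) < ‖l₁‖ ^ n := by positivity
  have hl0 : l₁ ^ n ≠ 0 := pow_ne_zero n (by
    intro h
    rw [h] at hl
    simp at hl
    linarith)
  set w := z / l₁ ^ n with hw
  have hwz : l₁ ^ n * w = z := by
    rw [hw]; field_simp
  have hwabs : ‖w‖ ≤ r := by
    rw [hw, norm_div, norm_pow]
    rw [div_le_iff₀ hln]
    rw [div_lt_iff₀ hr] at hn
    nlinarith
  have hgw : g w = 0 := hball w hwabs
  have h2 := hiter n w
  rw [hwz, hgw, mul_zero] at h2
  exact h2
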